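/- Let X be a compact metric space, S ⊆ C(ℝ,X) a shift-invariant Borel set, and μ an invariant measure of S. For t ∈ ℝ and A ⊆ X define V(t)⁻¹A := {x ∈ X : there exists φ ∈ S with φ(0) = x and φ(t) ∈ A}. Then for every Borel set B ⊆ X, setting B_∞ := ⋂_{N=0}^∞ ⋃_{n=N}^∞ V(n)⁻¹B (n ranging over natural numbers), the outer measure of B \ B_∞ induced by μ is zero; equivalently, μ-almost every point of B lies in B_∞. -/
import Mathlib


open Set Filter Topology MeasureTheory ProbabilityTheory

namespace AxODE

variable {X : Type*} [MetricSpace X]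

/-- The shift map `σ(t, φ)(s) = φ(s + t)` on `C(ℝ, X)`. -/
def shift (t : ℝ) (φ : C(ℝ, X)) : C(ℝ, X) :=
  ⟨fun s => φ (s + t), φ.continuous.comp (continuous_add_right t)⟩

/-- `S` is shift-invariant if `σ(t, φ) ∈ S` for all `t ∈ ℝ` and `φ ∈ S`. -/
def ShiftInvariant (S : Set C(ℝ, X)) : Prop :=
  ∀ (t : ℝ), ∀ φ ∈ S, shift t φ ∈ S

/-- `V(t)⁻¹A = {x ∈ X : ∃ φ ∈ S, φ(0) = x, φ(t) ∈ A}`. -/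
def Vinv (S : Set C(ℝ, X)) (t : ℝ) (A : Set X) : Set X :=
  {x | ∃ φ ∈ S, φ 0 = x ∧ φ t ∈ A}

lemma continuous_shift (t : ℝ) : Continuous (shift t : C(ℝ, X) → C(ℝ, X)) := by
  have : (shift t : C(ℝ, X) → C(ℝ, X))
      = fun φ => φ.comp ⟨fun s => s + t, continuous_add_right t⟩ := by
    ext φ s
    rfl
  rw [this]
  exact ContinuousMap.continuous_precomp _

lemma iterate_shift (n : ℕ) (φ : C(ℝ, X)) : (shift 1)^[n] φ = shift (n : ℝ) φ := by
  induction n with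
  | zero => ext s; simp [shift]
  | succ n ih =>
    rw [Function.iterate_succ_apply', ih]
    ext s
    show φ (s + 1 + (n : ℝ)) = φ (s + ((n : ℕ) + 1 : ℕ))
    congr 1
    push_cast
    ring

/-- Poincaré recurrence.  Note: a measure in Mathlib, applied to an
arbitrary (possibly non-measurable) set, gives the induced outer measure of that set. -/
theorem poincare_recurrence [CompactSpace X]
    [MeasurableSpace X] [BorelSpace X]
    [MeasurableSpace C(ℝ, X)] [BorelSpace C(ℝ, X)]
    (S : Set C(ℝ, X)) (hS : ShiftInvariant S) (hSmeas : MeasurableSet S)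
    (μ : Measure X) (ν : Measure C(ℝ, X)) (hν : IsProbabilityMeasure ν)
    (hνS : ν S = 1) (hνinv : ∀ t : ℝ, Measure.map (shift t) ν = ν)
    (hμ : μ = Measure.map (fun φ : C(ℝ, X) => φ 0) ν)
    (B : Set X) (hB : MeasurableSet B) :
    μ (B \ ⋂ N : ℕ, ⋃ n : ℕ, ⋃ _ : N ≤ n, Vinv S (n : ℝ) B) = 0 := by
  classical
  -- Basic setup
  have hfc : Continuous (fun φ : C(ℝ, X) => φ 0) := continuous_eval_const 0
  have hfm : Measurable (fun φ : C(ℝ, X) => φ 0) := hfc.measurable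
  -- nonemptiness
  rcases isEmpty_or_nonempty C(ℝ, X) with hE | hNE
  · exfalso
    have h1 : ν Set.univ = 1 := measure_univ
    rw [Set.univ_eq_empty_iff.2 hE] at h1
    simp at h1
  -- the shift by 1 is a conservative measure-preserving map
  have hTm : Measurable (shift (1 : ℝ) : C(ℝ, X) → C(ℝ, X)) := (continuous_shift 1).measurable
  have hTpres : MeasurePreserving (shift (1 : ℝ) : C(ℝ, X) → C(ℝ, X)) ν ν := ⟨hTm, hνinv 1⟩
  have hcons : MeasureTheory.Conservative (shift (1 : ℝ) : C(ℝ, X) → C(ℝ, X)) ν :=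
    hTpres.conservative
  -- the recurrence sets
  set E : Set C(ℝ, X) := S ∩ (fun φ : C(ℝ, X) => φ 0) ⁻¹' B with hE_def
  have hEm : MeasurableSet E := hSmeas.inter (hfm hB)
  set G : Set C(ℝ, X) :=
    ⋂ N : ℕ, ⋃ n : ℕ, ⋃ _ : N ≤ n, (shift (1 : ℝ) : C(ℝ, X) → C(ℝ, X))^[n] ⁻¹' E with hG_def
  have hGm : MeasurableSet G :=
    MeasurableSet.iInter fun N => MeasurableSet.iUnion fun n => MeasurableSet.iUnion fun _ =>
      (hTm.iterate n) hEm
  -- Poincaré recurrence for the discrete system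
  have hEG : ν (E \ G) = 0 := by
    have hsub : E \ G ⊆ ⋃ N : ℕ, {φ ∈ E | ∀ m ≥ N, (shift (1 : ℝ))^[m] φ ∉ E} := by
      intro φ hφ
      obtain ⟨hφE, hφG⟩ := hφ
      simp only [hG_def, mem_iInter, mem_iUnion, not_forall, not_exists] at hφG
      obtain ⟨N, hN⟩ := hφG
      exact mem_iUnion.2 ⟨N, hφE, fun m hm => hN m hm⟩
    refine measure_mono_null hsub (measure_iUnion_null fun N => ?_)
    exact hcons.measure_mem_forall_ge_image_notMem_eq_zero hEm.nullMeasurableSet N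
  have hSc : ν Sᶜ = 0 := (prob_compl_eq_zero_iff hSmeas).2 hνS
  -- the null set F
  set F : Set C(ℝ, X) := (fun φ : C(ℝ, X) => φ 0) ⁻¹' B \ (E ∩ G) with hF_def
  have hFm : MeasurableSet F := (hfm hB).diff (hEm.inter hGm)
  have hFnull : ν F = 0 := by
    have hsub : F ⊆ Sᶜ ∪ (E \ G) := by
      intro φ hφ
      obtain ⟨hφB, hφEG⟩ := hφ
      by_cases hφS : φ ∈ S
      · exact Or.inr ⟨⟨hφS, hφB⟩, fun hφG => hφEG ⟨⟨hφS, hφB⟩, hφG⟩⟩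
      · exact Or.inl hφS
    exact measure_mono_null hsub (measure_union_null hSc hEG)
  -- Disintegration over the evaluation at 0
  haveI : PolishSpace C(ℝ, X) := inferInstance
  haveI : StandardBorelSpace C(ℝ, X) := inferInstance
  set ρ : Measure (X × C(ℝ, X)) := ν.map (fun φ => (φ 0, φ)) with hρ_def
  have hρm : Measurable (fun φ : C(ℝ, X) => (φ 0, φ)) := hfm.prodMk measurable_id
  haveI : IsProbabilityMeasure ρ := Measure.isProbabilityMeasure_map hρm.aemeasurable
  have hfst : ρ.fst = μ := by
    rw [hρ_def, Measure.fst, Measure.map_map measurable_fst hρm, hμ]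
    rfl
  set κ := ρ.condKernel with hκ_def
  have hdis : ρ.fst ⊗ₘ κ = ρ := ρ.disintegrate κ
  -- generic a.e. fact from null sets
  have hae : ∀ Q : Set (X × C(ℝ, X)), MeasurableSet Q → ρ Q = 0 →
      ∀ᵐ x ∂μ, κ x (Prod.mk x ⁻¹' Q) = 0 := by
    intro Q hQm hQ0
    rw [← hdis, Measure.compProd_apply hQm, hfst] at hQ0
    exact (lintegral_eq_zero_iff
      (ProbabilityTheory.Kernel.measurable_kernel_prodMk_left hQm)).1 hQ0
  -- a.e., the kernel is supported on the fiber
  have hQ1m : MeasurableSet {p : X × C(ℝ, X) | p.2 0 = p.1} :=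
    (isClosed_eq (hfc.comp continuous_snd) continuous_fst).measurableSet
  have h1 : ∀ᵐ x ∂μ, κ x {φ : C(ℝ, X) | ¬ φ 0 = x} = 0 := by
    have := hae {p : X × C(ℝ, X) | p.2 0 = p.1}ᶜ hQ1m.compl (by
      rw [hρ_def, Measure.map_apply hρm hQ1m.compl]
      have hpre : (fun φ : C(ℝ, X) => (φ 0, φ)) ⁻¹' {p : X × C(ℝ, X) | p.2 0 = p.1}ᶜ = ∅ := by
        ext φ
        simp
      rw [hpre]
      simp)
    filter_upwards [this] with x hx
    exact hx
  -- a.e., the kernel does not charge F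
  have h2 : ∀ᵐ x ∂μ, κ x F = 0 := by
    have := hae (Set.univ ×ˢ F) (MeasurableSet.univ.prod hFm) (by
      rw [hρ_def, Measure.map_apply hρm (MeasurableSet.univ.prod hFm)]
      convert hFnull using 2
      ext φ
      simp)
    filter_upwards [this] with x hx
    convert hx using 2
    ext φ
    simp
  -- main pointwise argument
  have key : ∀ᵐ x ∂μ, x ∈ B → x ∈ ⋂ N : ℕ, ⋃ n : ℕ, ⋃ _ : N ≤ n, Vinv S (n : ℝ) B := by
    filter_upwards [h1, h2] with x hx1 hx2 hxB
    refine mem_iInter.2 fun N => ?_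
    -- the set of "good" trajectories through x has positive κ x-measure
    have hbad : κ x ({φ : C(ℝ, X) | ¬ φ 0 = x} ∪ F) = 0 := measure_union_null hx1 hx2
    have hgood : κ x (({φ : C(ℝ, X) | ¬ φ 0 = x} ∪ F)ᶜ) ≠ 0 := by
      intro h0
      have := measure_union_null hbad h0
      rw [Set.union_compl_self] at this
      simp [measure_univ] at this
    have hsub : ({φ : C(ℝ, X) | ¬ φ 0 = x} ∪ F)ᶜ ⊆
        ⋃ n : ℕ, ⋃ _ : N ≤ n, {φ : C(ℝ, X) | φ ∈ S ∧ φ 0 = x ∧ φ (n : ℝ) ∈ B} := by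
      intro φ hφ
      rw [Set.compl_union] at hφ
      obtain ⟨hφ0, hφF⟩ := hφ
      have hφ0' : φ 0 = x := not_not.1 hφ0
      have hφB : φ ∈ (fun φ : C(ℝ, X) => φ 0) ⁻¹' B := by
        simp only [Set.mem_preimage, hφ0']
        exact hxB
      have hφEG : φ ∈ E ∩ G := by
        by_contra h
        exact hφF ⟨hφB, h⟩
      obtain ⟨⟨hφS, -⟩, hφG⟩ := hφEG
      have hmem := mem_iInter.1 hφG N
      simp only [mem_iUnion] at hmem
      obtain ⟨n, hn, hφn⟩ := hmem
      rw [Set.mem_preimage, iterate_shift] at hφn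
      refine mem_iUnion.2 ⟨n, mem_iUnion.2 ⟨hn, hφS, hφ0', ?_⟩⟩
      have : (shift (n : ℝ) φ) 0 ∈ B := hφn.2
      simpa [shift, zero_add] using this
    have hpos : κ x (⋃ n : ℕ, ⋃ _ : N ≤ n,
        {φ : C(ℝ, X) | φ ∈ S ∧ φ 0 = x ∧ φ (n : ℝ) ∈ B}) ≠ 0 := by
      intro h0
      exact hgood (measure_mono_null hsub h0)
    obtain ⟨n, hn, hne⟩ : ∃ n : ℕ, N ≤ n ∧
        κ x {φ : C(ℝ, X) | φ ∈ S ∧ φ 0 = x ∧ φ (n : ℝ) ∈ B} ≠ 0 := by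
      by_contra h
      push_neg at h
      exact hpos (measure_iUnion_null fun n => measure_iUnion_null fun hn => h n hn)
    obtain ⟨φ, hφS, hφ0, hφn⟩ := nonempty_of_measure_ne_zero hne
    exact mem_iUnion.2 ⟨n, mem_iUnion.2 ⟨hn, φ, hφS, hφ0, hφn⟩⟩
  -- conclude
  have hnull := ae_iff.1 key
  refine measure_mono_null ?_ hnull
  intro x hx
  simp only [Set.mem_setOf_eq]
  exact fun h => hx.2 (h hx.1)

end AxODE
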